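/- Assume 2^ℵ0 < ℵ_{ω₁} (the aleph indexed by the ordinal ω₁) and assume BA_Lip(2^ω). Then 2^ℵ0 = 2^ℵ1. -/

import Mathlib

/-- A set `S` in a topological space is `ℵ₁`-dense if its intersection with every nonempty
open set has cardinality `ℵ₁`. -/
def Aleph1Dense {Z : Type*} [TopologicalSpace Z] (S : Set Z) : Prop :=
  ∀ U : Set Z, IsOpen U → U.Nonempty → Cardinal.mk ↥(S ∩ U) = Cardinal.aleph 1

/-- `f` is Lipschitz: if `x` and `y` agree below `n` then so do `f x` and `f y`. -/
def IsLip {X : ℕ → Type*} (f : (∀ n, X n) → (∀ n, X n)) : Prop :=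
  ∀ x y : ∀ n, X n, ∀ n : ℕ, (∀ i < n, x i = y i) → ∀ i < n, f x i = f y i

open Cardinal Set

namespace Stmt12Aux

abbrev C := ℕ → Bool

/-! ### Basic clopen cylinders -/

abbrev S := Σ n : ℕ, Fin n → Bool

def Cyl (n : ℕ) (σ : Fin n → Bool) : Set C := {y | ∀ i : Fin n, y i = σ i}

lemma exists_cyl_subset {U : Set C} (hU : IsOpen U) (hne : U.Nonempty) :
    ∃ s : S, Cyl s.1 s.2 ⊆ U := by
  obtain ⟨x, hx⟩ := hne
  obtain ⟨I, u, hIu, hsub⟩ := isOpen_pi_iff.mp hU x hx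
  refine ⟨⟨I.sup Nat.succ, fun i => x i⟩, fun y hy => hsub ?_⟩
  intro a ha
  have ha' : a < I.sup Nat.succ :=
    Nat.lt_of_lt_of_le (Nat.lt_succ_self a) (Finset.le_sup (f := Nat.succ) ha)
  have : y a = x a := hy ⟨a, ha'⟩
  rw [this]; exact (hIu a ha).2

lemma infinite_S : Infinite S :=
  Infinite.of_injective (fun n => (⟨n, fun _ => false⟩ : S))
    (fun _ _ h => congrArg Sigma.fst h)

lemma mk_S : #S = ℵ₀ := by have := infinite_S; exact mk_eq_aleph0 S

/-! ### Coding Lipschitz functions by countable data -/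

abbrev CodeT := ∀ n : ℕ, (Fin (n + 1) → Bool) → Bool

def code (f : C → C) : CodeT :=
  fun n v => f (fun i => if h : i < n + 1 then v ⟨i, h⟩ else false) n

lemma code_spec {f : C → C} (hf : IsLip f) (x : C) (n : ℕ) :
    f x n = code f n (fun i => x i.1) :=
  hf x (fun i => if h : i < n + 1 then x i else false) (n + 1)
    (fun i hi => by simp [hi]) n (Nat.lt_succ_self n)

lemma mk_code_le : #CodeT ≤ (2 : Cardinal) ^ ℵ₀ := by
  rw [show #CodeT = prod (fun n => #((Fin (n + 1) → Bool) → Bool)) from mk_pi _]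
  calc prod (fun n => #((Fin (n + 1) → Bool) → Bool))
      ≤ prod (fun _ : ℕ => (2 : Cardinal) ^ ℵ₀) :=
        prod_le_prod _ _ (fun n => le_trans mk_le_aleph0 (cantor ℵ₀).le)
    _ = ((2 : Cardinal) ^ ℵ₀) ^ #ℕ := prod_const' _ _
    _ = (2 : Cardinal) ^ ℵ₀ := by rw [mk_nat, ← power_mul, aleph0_mul_aleph0]

/-! ### The index order `W` of order type `ω₁` -/

abbrev W := (Cardinal.aleph 1).ord.ToType

lemma mk_W : #W = ℵ₁ := by rw [Cardinal.mk_toType, Cardinal.card_ord]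

lemma mk_Iio_le (w : W) : #(Set.Iio w) ≤ ℵ₀ := by
  have h := Cardinal.mk_Iio_ord_toType w
  have h2 : (Set.Iio w).Countable := (countable_iff_lt_aleph_one _).mpr h
  exact mk_le_aleph0_iff.mpr h2.to_subtype

lemma mk_Iic_le (w : W) : #(Set.Iic w) ≤ ℵ₀ := by
  have he : (Set.Iic w) = Set.Iio w ∪ {w} := (Set.Iio_union_right).symm
  rw [he]
  calc #(Set.Iio w ∪ {w} : Set W) ≤ #(Set.Iio w) + #({w} : Set W) := mk_union_le _ _
    _ ≤ ℵ₀ + ℵ₀ := add_le_add (mk_Iio_le w) (by rw [mk_singleton]; exact one_le_aleph0)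
    _ = ℵ₀ := aleph0_add_aleph0

lemma aleph_one_le_two_power : ℵ₁ ≤ (2 : Cardinal) ^ ℵ₀ := by
  rw [two_power_aleph0]; exact aleph_one_le_continuum

/-- a labelling of `W` by basic clopen sets such that every basic clopen set
gets `ℵ₁` many labels -/
noncomputable def eW : W ≃ S × W := by
  apply Classical.choice
  apply Cardinal.eq.mp
  rw [mk_prod, lift_id, lift_id, mk_S, mk_W]
  exact (mul_eq_right (aleph0_lt_aleph_one.le) aleph0_lt_aleph_one.le aleph0_ne_zero).symm

noncomputable def cl : W → S := fun w => (eW w).1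

noncomputable def fiberEquiv (s : S) : {w : W // cl w = s} ≃ W where
  toFun w := (eW w.1).2
  invFun v := ⟨eW.symm (s, v), by simp [cl]⟩
  left_inv := by
    rintro ⟨w, hw⟩
    apply Subtype.ext
    show eW.symm (s, (eW w).2) = w
    rw [← hw]; show eW.symm ((eW w).1, (eW w).2) = w; simp
  right_inv := by intro v; simp [cl]

lemma mk_fiber (s : S) : #{w : W // cl w = s} = ℵ₁ :=
  (mk_congr (fiberEquiv s)).trans mk_W

/-! ### Nodes of the tree `2^{<ω₁}` and their embedding into Cantor space -/

abbrev Node := Σ w : W, (Set.Iio w → Bool)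

def node (g : W → Bool) (w : W) : Node := ⟨w, fun v => g v.1⟩

lemma node_fst (g : W → Bool) (w : W) : (node g w).1 = w := rfl

lemma mk_node_le : #Node ≤ (2 : Cardinal) ^ ℵ₀ := by
  rw [show #Node = sum (fun w : W => #(Set.Iio w → Bool)) from mk_sigma _]
  calc sum (fun w : W => #(Set.Iio w → Bool))
      ≤ sum (fun _ : W => (2 : Cardinal) ^ ℵ₀) := by
        apply sum_le_sum
        intro w
        have e1 : #(↑(Set.Iio w) → Bool) = (2 : Cardinal) ^ #(Set.Iio w) := by
          rw [mk_arrow]; simp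
        rw [e1]
        exact power_le_power_left two_ne_zero (mk_Iio_le w)
    _ = #W * (2 : Cardinal) ^ ℵ₀ := sum_const' _ _
    _ = (2 : Cardinal) ^ ℵ₀ := by
        rw [mk_W]
        exact mul_eq_right (cantor ℵ₀).le aleph_one_le_two_power
          ((lt_of_le_of_lt (zero_le : (0 : Cardinal) ≤ ℵ₀) aleph0_lt_aleph_one).ne')

lemma mk_C : #C = (2 : Cardinal) ^ ℵ₀ := by
  rw [← power_def, mk_bool, mk_nat]

noncomputable def E : Node ↪ C :=
  Classical.choice ((Cardinal.le_def Node C).mp (mk_node_le.trans_eq mk_C.symm))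

/-- the "doubling" map: no two consecutive values are both `false` -/
def dbl (x : C) : C := fun i => if i % 2 = 0 then x (i / 2) else true

lemma dbl_pair (x : C) (j : ℕ) : dbl x j = true ∨ dbl x (j + 1) = true := by
  rcases Nat.even_or_odd j with h | h
  · right
    have hj : j % 2 = 0 := Nat.even_iff.mp h
    have : (j + 1) % 2 = 1 := by omega
    simp [dbl, this]
  · left
    have : j % 2 = 1 := Nat.odd_iff.mp h
    simp [dbl, this]

lemma dbl_inj : Function.Injective dbl := by
  intro x y h
  funext j
  have := congrFun h (2 * j)
  simpa [dbl, Nat.mul_div_cancel_left] using this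

/-- embed a node `p` into Cantor space:
`[σ bits (m of them)] [1-run (m)] [0,0] [dbl (E p)]` where `⟨m, σ⟩ = cl p.1`. -/
noncomputable def emb (p : Node) : C := fun i =>
  if h : i < (cl p.1).1 then (cl p.1).2 ⟨i, h⟩
  else if i < 2 * (cl p.1).1 then true
  else if i < 2 * (cl p.1).1 + 2 then false
  else dbl (E p) (i - (2 * (cl p.1).1 + 2))

lemma emb_mem_cyl (p : Node) : emb p ∈ Cyl (cl p.1).1 (cl p.1).2 := by
  intro i
  simp [emb, i.isLt]

lemma emb_marker (p : Node) :
    emb p (2 * (cl p.1).1) = false ∧ emb p (2 * (cl p.1).1 + 1) = false := by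
  constructor <;>
  · unfold emb
    rw [dif_neg (by omega)]
    rw [if_neg (by omega), if_pos (by omega)]

lemma emb_tail (p : Node) (j : ℕ) :
    emb p (2 * (cl p.1).1 + 2 + j) = dbl (E p) j := by
  unfold emb
  rw [dif_neg (by omega), if_neg (by omega), if_neg (by omega)]
  congr 1
  omega

lemma emb_len_aux {p q : Node} (h : emb p = emb q)
    (hlt : (cl p.1).1 < (cl q.1).1) : False := by
  set m := (cl p.1).1 with hm
  set k := (cl q.1).1 with hk
  have h1 := (emb_marker q).1
  have h2 := (emb_marker q).2
  have e1 : 2 * k = 2 * m + 2 + (2 * k - (2 * m + 2)) := by omega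
  have e2 : 2 * k + 1 = 2 * m + 2 + ((2 * k - (2 * m + 2)) + 1) := by omega
  rw [← h] at h1 h2
  rw [e1, emb_tail] at h1
  rw [e2, emb_tail] at h2
  rcases dbl_pair (E p) (2 * k - (2 * m + 2)) with hd | hd
  · rw [h1] at hd; exact Bool.false_ne_true hd
  · rw [h2] at hd; exact Bool.false_ne_true hd

lemma emb_inj : Function.Injective emb := by
  intro p q h
  have hlen : (cl p.1).1 = (cl q.1).1 := by
    rcases lt_trichotomy (cl p.1).1 (cl q.1).1 with hl | he | hl
    · exact absurd (emb_len_aux h hl) id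
    · exact he
    · exact absurd (emb_len_aux h.symm hl) id
  apply E.injective
  apply dbl_inj
  funext j
  have t1 := emb_tail p j
  have t2 := emb_tail q j
  rw [h, hlen, t2] at t1
  exact t1.symm

/-! ### The `ℵ₁`-dense branch sets -/

noncomputable def branchSet (g : W → Bool) : Set C :=
  Set.range (fun w => emb (node g w))

lemma node_inj (g : W → Bool) : Function.Injective (node g) :=
  fun _ _ h => congrArg Sigma.fst h

lemma dense_branch (g : W → Bool) : Aleph1Dense (branchSet g) := by
  intro U hU hne
  obtain ⟨s, hsub⟩ := exists_cyl_subset hU hne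
  apply le_antisymm
  · calc #(branchSet g ∩ U : Set C) ≤ #(branchSet g) :=
        mk_le_mk_of_subset inter_subset_left
      _ ≤ #W := mk_range_le
      _ = ℵ₁ := mk_W
  · rw [← mk_fiber s]
    apply mk_le_of_injective
      (f := fun w : {w : W // cl w = s} =>
        (⟨emb (node g w.1), ⟨⟨w.1, rfl⟩, by
          apply hsub
          have hc := emb_mem_cyl (node g w.1)
          rw [node_fst, w.2] at hc
          exact hc⟩⟩ : (branchSet g ∩ U : Set C)))
    intro a b hab
    have : emb (node g a.1) = emb (node g b.1) := congrArg Subtype.val hab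
    exact Subtype.ext (node_inj g (emb_inj this))

lemma branch_inter_le {g g' : W → Bool} (hne : g ≠ g') :
    #(branchSet g ∩ branchSet g' : Set C) ≤ ℵ₀ := by
  obtain ⟨w0, hw0⟩ := Function.ne_iff.mp hne
  have hsub : (branchSet g ∩ branchSet g' : Set C) ⊆
      (fun w => emb (node g w)) '' (Set.Iic w0) := by
    rintro y ⟨⟨w, hw⟩, ⟨w', hw'⟩⟩
    have heq : node g w = node g' w' := emb_inj (hw.trans hw'.symm)
    have hww' : w = w' := congrArg Sigma.fst heq
    subst hww'
    have hagree : ∀ v : Set.Iio w, g v.1 = g' v.1 := by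
      have h2 : HEq (node g w).2 (node g' w).2 := by rw [heq]
      intro v
      exact congrFun (eq_of_heq h2) v
    have hwle : w ≤ w0 := by
      by_contra hc
      exact hw0 (hagree ⟨w0, lt_of_not_ge hc⟩)
    exact ⟨w, hwle, hw⟩
  calc #(branchSet g ∩ branchSet g' : Set C)
      ≤ #((fun w => emb (node g w)) '' (Set.Iic w0)) := mk_le_mk_of_subset hsub
    _ ≤ #(Set.Iic w0) := mk_image_le
    _ ≤ ℵ₀ := mk_Iic_le w0

/-- The key cardinal inequality, in universe zero. -/
lemma main_ineq
    (hBA : ∀ A B : Set (ℕ → Bool), Aleph1Dense A → Aleph1Dense B →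
      ∃ f : (ℕ → Bool) → (ℕ → Bool), IsLip f ∧ Set.InjOn f A ∧ f '' A ⊆ B) :
    (2 : Cardinal.{0}) ^ Cardinal.aleph 1 ≤ (2 : Cardinal.{0}) ^ Cardinal.aleph0 := by
  by_contra hlt
  set A : Set C := branchSet (fun _ => false) with hA
  have hdA : Aleph1Dense A := dense_branch _
  have H : ∀ g : W → Bool, ∃ f : C → C, IsLip f ∧ Set.InjOn f A ∧ f '' A ⊆ branchSet g :=
    fun g => hBA A (branchSet g) hdA (dense_branch g)
  choose F hLip hInj hSub using H
  have hG : ¬ Function.Injective (fun g => code (F g)) := by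
    intro hinj
    have h1 : #(W → Bool) ≤ #CodeT := mk_le_of_injective hinj
    have h2 : #(W → Bool) = (2 : Cardinal) ^ ℵ₁ := by
      rw [← mk_W, ← power_def]
      congr 1
      exact mk_bool
    rw [h2] at h1
    exact hlt (h1.trans mk_code_le)
  obtain ⟨g, g', hcode, hgg'⟩ := Function.not_injective_iff.mp hG
  have hF : F g = F g' := by
    funext x
    funext n
    rw [code_spec (hLip g) x n, code_spec (hLip g') x n, hcode]
  have himg : F g '' A ⊆ (branchSet g ∩ branchSet g' : Set C) := by
    apply subset_inter (hSub g)
    rw [hF]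
    exact hSub g'
  have hAcard : #A = ℵ₁ := by
    have := hdA univ isOpen_univ ⟨(fun _ => false), trivial⟩
    rwa [inter_univ] at this
  have hbig : ℵ₁ ≤ #(branchSet g ∩ branchSet g' : Set C) := by
    calc ℵ₁ = #A := hAcard.symm
      _ = #(F g '' A) := (mk_image_eq_of_injOn _ _ (hInj g)).symm
      _ ≤ _ := mk_le_mk_of_subset himg
  exact absurd (hbig.trans (branch_inter_le hgg')) (by
    intro hcon
    exact absurd (lt_of_lt_of_le aleph0_lt_aleph_one hcon) (lt_irrefl _))

end Stmt12Aux

/-- If `2^ℵ₀ < ℵ_{ω₁}` then `BA_Lip(2^ω)` implies `2^ℵ₀ = 2^ℵ₁`. -/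
theorem stmt_12
    (hsmall : 2 ^ Cardinal.aleph0 < Cardinal.aleph (Ordinal.omega 1))
    (hBA : ∀ A B : Set (ℕ → Bool), Aleph1Dense A → Aleph1Dense B →
      ∃ f : (ℕ → Bool) → (ℕ → Bool), IsLip f ∧ Set.InjOn f A ∧ f '' A ⊆ B) :
    (2 : Cardinal) ^ Cardinal.aleph0 = (2 : Cardinal) ^ Cardinal.aleph 1 := by
  have key : (2 : Cardinal.{0}) ^ Cardinal.aleph0 = (2 : Cardinal.{0}) ^ Cardinal.aleph 1 :=
    le_antisymm
      (Cardinal.power_le_power_left two_ne_zero Cardinal.aleph0_lt_aleph_one.le)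
      (Stmt12Aux.main_ineq hBA)
  refine Eq.trans (Eq.trans ?_ (congrArg Cardinal.lift key)) ?_
  · rw [Cardinal.lift_power, Cardinal.lift_two, Cardinal.lift_aleph0]
  · rw [Cardinal.lift_power, Cardinal.lift_two, Cardinal.lift_aleph, Ordinal.lift_one]
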